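/- Let k ≥ 2, let A_1, …, A_k be finite abelian groups, and let φ : A_1 × ⋯ × A_k → ℝ/ℤ be a multilinear map whose image contains an element of order q = p^n for some prime p and n ≥ 1. Then bias(φ) ≤ (n+1)^{k-2} / q. -/

import Mathlib

open scoped ComplexOrder

/-- A map of (dependent) products of abelian groups is multiadditive (multilinear over ℤ)
if it is additive in each coordinate separately. -/
def IsMultiadditive {ι : Type} [DecidableEq ι] {A : ι → Type} [∀ i, AddCommGroup (A i)]
    {B : Type} [AddCommMonoid B] (φ : (∀ i, A i) → B) : Prop :=
  ∀ (i : ι) (x : ∀ j, A j) (a b : A i),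
    φ (Function.update x i (a + b)) = φ (Function.update x i a) + φ (Function.update x i b)

/-- The standard character `e(x) = exp(2πix)` of `ℝ/ℤ`. -/
noncomputable def eChar (x : AddCircle (1 : ℝ)) : ℂ := AddCircle.toCircle x

/-- The bias of a map `A_1 × ⋯ × A_k → ℝ/ℤ`. -/
noncomputable def bias {ι : Type} [Fintype ι] [DecidableEq ι] {A : ι → Type}
    [∀ i, Fintype (A i)] (φ : (∀ i, A i) → AddCircle (1 : ℝ)) : ℂ :=
  (∑ x : ∀ i, A i, eChar (φ x)) / (Fintype.card (∀ i, A i) : ℂ)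

/-- The bilinear map `m_q : ℤ/q × ℤ/q → ℝ/ℤ`, `(x, y) ↦ xy/q mod 1`. -/
noncomputable def mq (q : ℕ) (x y : ZMod q) : AddCircle (1 : ℝ) :=
  (((x.val * y.val : ℕ) : ℝ) / q : ℝ)

/-- A multilinear map `φ : A_1 × ⋯ × A_k → ℝ/ℤ` factors through `m_q` if
`φ(x) = m_q(φ₁(x_I), φ₂(x_{I^c}))` for some `I` with `0 < |I| < k` and multilinear `φ₁, φ₂`. -/
def FactorsThroughMq {ι : Type} [Fintype ι] [DecidableEq ι] {A : ι → Type}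
    [∀ i, AddCommGroup (A i)] (q : ℕ) (φ : (∀ i, A i) → AddCircle (1 : ℝ)) : Prop :=
  ∃ I : Finset ι, I.Nonempty ∧ I ≠ Finset.univ ∧
    ∃ (φ₁ : (∀ i : I, A i) → ZMod q) (φ₂ : (∀ i : (Iᶜ : Finset ι), A i) → ZMod q),
      IsMultiadditive φ₁ ∧ IsMultiadditive φ₂ ∧
      ∀ x : ∀ i, A i, φ x = mq q (φ₁ (fun i => x i)) (φ₂ (fun i => x i))
open Finset Function
open scoped Classical

lemma eChar_add (x y : AddCircle (1:ℝ)) : eChar (x + y) = eChar x * eChar y := by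
  simp [eChar, AddCircle.toCircle_add]

lemma eChar_zero : eChar (0 : AddCircle (1:ℝ)) = 1 := by simp [eChar]

lemma eChar_eq_one {x : AddCircle (1:ℝ)} (h : eChar x = 1) : x = 0 := by
  have : AddCircle.toCircle x = AddCircle.toCircle (0 : AddCircle (1:ℝ)) := by
    ext
    simpa [eChar] using h
  exact AddCircle.injective_toCircle one_ne_zero this

/-- Orthogonality: sum of a nontrivial character vanishes. -/
lemma char_sum {B : Type} [AddCommGroup B] [Fintype B] (ψ : B → AddCircle (1:ℝ))
    (hψ : ∀ a b, ψ (a + b) = ψ a + ψ b) :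
    ∑ b : B, eChar (ψ b) = if ∀ b, ψ b = 0 then (Fintype.card B : ℂ) else 0 := by
  split_ifs with h
  · simp [fun b => h b, eChar_zero, Finset.card_univ]
  · push_neg at h
    obtain ⟨b₀, hb₀⟩ := h
    have key : ∑ b : B, eChar (ψ b) = eChar (ψ b₀) * ∑ b : B, eChar (ψ b) := by
      conv_lhs => rw [← Equiv.sum_comp (Equiv.addRight b₀) (fun b => eChar (ψ b))]
      rw [Finset.mul_sum]
      refine Finset.sum_congr rfl fun b _ => ?_
      simp only [Equiv.coe_addRight]
      rw [hψ, eChar_add, mul_comm]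
    have hne : eChar (ψ b₀) ≠ 1 := fun h1 => hb₀ (eChar_eq_one h1)
    have : (eChar (ψ b₀) - 1) * ∑ b : B, eChar (ψ b) = 0 := by ring_nf; linear_combination -key
    rcases mul_eq_zero.mp this with h1 | h2
    · exact absurd (sub_eq_zero.mp h1) hne
    · exact h2

section SumUpdate
variable {ι : Type} [Fintype ι] [DecidableEq ι] {A : ι → Type} [∀ i, Fintype (A i)]

lemma sum_update {M : Type} [AddCommMonoid M] (i₁ : ι) (f : (∀ i, A i) → M) :
    ∑ x₀ : A i₁, ∑ x : ∀ i, A i, f (Function.update x i₁ x₀)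
      = Fintype.card (A i₁) • ∑ x : ∀ i, A i, f x := by
  have upd : ∀ (x₀ : A i₁) (y : A i₁ × ∀ j : {j // j ≠ i₁}, A j),
      Function.update ((Equiv.piSplitAt i₁ A).symm y) i₁ x₀
        = (Equiv.piSplitAt i₁ A).symm (x₀, y.2) := by
    intro x₀ y
    funext j
    by_cases h : j = i₁
    · subst h; simp
    · simp [Function.update_of_ne h, Equiv.piSplitAt_symm_apply, h]
  have e := (Equiv.piSplitAt i₁ A).symm
  calc ∑ x₀ : A i₁, ∑ x : ∀ i, A i, f (Function.update x i₁ x₀)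
      = ∑ x₀ : A i₁, ∑ y : A i₁ × ∀ j : {j // j ≠ i₁}, A j,
          f (Function.update ((Equiv.piSplitAt i₁ A).symm y) i₁ x₀) := by
        refine Finset.sum_congr rfl fun x₀ _ => ?_
        rw [← Equiv.sum_comp (Equiv.piSplitAt i₁ A).symm
          (fun x => f (Function.update x i₁ x₀))]
    _ = ∑ x₀ : A i₁, ∑ y : A i₁ × ∀ j : {j // j ≠ i₁}, A j,
          f ((Equiv.piSplitAt i₁ A).symm (x₀, y.2)) := by
        refine Finset.sum_congr rfl fun x₀ _ => Finset.sum_congr rfl fun y _ => by rw [upd]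
    _ = ∑ x₀ : A i₁, ∑ a : A i₁, ∑ z : ∀ j : {j // j ≠ i₁}, A j,
          f ((Equiv.piSplitAt i₁ A).symm (x₀, z)) := by
        refine Finset.sum_congr rfl fun x₀ _ => ?_
        rw [Fintype.sum_prod_type]
    _ = ∑ x₀ : A i₁, Fintype.card (A i₁) •
          ∑ z : ∀ j : {j // j ≠ i₁}, A j, f ((Equiv.piSplitAt i₁ A).symm (x₀, z)) := by
        refine Finset.sum_congr rfl fun x₀ _ => ?_
        rw [Finset.sum_const, Finset.card_univ]
    _ = Fintype.card (A i₁) • ∑ x₀ : A i₁,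
          ∑ z : ∀ j : {j // j ≠ i₁}, A j, f ((Equiv.piSplitAt i₁ A).symm (x₀, z)) := by
        rw [Finset.smul_sum]
    _ = Fintype.card (A i₁) • ∑ y : A i₁ × ∀ j : {j // j ≠ i₁}, A j,
          f ((Equiv.piSplitAt i₁ A).symm y) := by rw [Fintype.sum_prod_type]
    _ = Fintype.card (A i₁) • ∑ x : ∀ i, A i, f x := by
        rw [Equiv.sum_comp (Equiv.piSplitAt i₁ A).symm f]

end SumUpdate

/-- If every multiple of `z` landing in `T` is divisible by `p^m`, then
`|T| * p^m ≤ |G|`. -/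
lemma card_subgroup_mul_le {G : Type} [AddCommGroup G] [Fintype G] (T : AddSubgroup G)
    (z : G) (pm : ℕ) (hdvd : ∀ t : ℕ, t ≠ 0 → t • z ∈ T → pm ∣ t) :
    Nat.card T * pm ≤ Fintype.card G := by
  have : Finite (G ⧸ T) := Quotient.finite _
  set t := addOrderOf ((z : G ⧸ T)) with ht
  have ht0 : t ≠ 0 := (addOrderOf_pos _).ne'
  have htz : t • z ∈ T := by
    rw [← QuotientAddGroup.eq_zero_iff]
    have : ((t • z : G) : G ⧸ T) = t • (z : G ⧸ T) :=
      (QuotientAddGroup.mk' T).map_nsmul t z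
    rw [this]
    exact addOrderOf_nsmul_eq_zero _
  have hpm : pm ∣ t := hdvd t ht0 htz
  have h1 : t ∣ Nat.card (G ⧸ T) := addOrderOf_dvd_natCard _
  have hq0 : Nat.card (G ⧸ T) ≠ 0 := Nat.card_ne_zero.mpr ⟨⟨0⟩, inferInstance⟩
  have : pm ≤ Nat.card (G ⧸ T) := Nat.le_of_dvd (Nat.pos_of_ne_zero hq0) (hpm.trans h1)
  calc Nat.card T * pm ≤ Nat.card T * Nat.card (G ⧸ T) := Nat.mul_le_mul_left _ this
    _ = Fintype.card G := by
        rw [mul_comm, ← AddSubgroup.card_eq_card_quotient_mul_card_addSubgroup,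
          Nat.card_eq_fintype_card]

section OrderHelpers
variable {G : Type} [AddCommGroup G]

lemma ord_dvd_mul_ord_nsmul (u : ℕ) (a : G) :
    addOrderOf a ∣ u * addOrderOf (u • a) := by
  apply addOrderOf_dvd_of_nsmul_eq_zero
  rw [mul_comm, mul_smul]
  exact addOrderOf_nsmul_eq_zero _

lemma pow_dvd_ord_nsmul_of_coprime {p : ℕ} (hp : p.Prime) {u j : ℕ} (hu : ¬ p ∣ u) (a : G)
    (h : p ^ j ∣ addOrderOf a) : p ^ j ∣ addOrderOf (u • a) := by
  have hcop : (p ^ j).Coprime u := (Nat.Prime.coprime_iff_not_dvd hp |>.mpr hu).pow_left j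
  exact hcop.dvd_of_dvd_mul_left (h.trans (ord_dvd_mul_ord_nsmul u a))

lemma pow_dvd_ord_psmul {p : ℕ} (hpne : p ≠ 0) {j : ℕ} (a : G)
    (h : p ^ (j + 1) ∣ addOrderOf a) : p ^ j ∣ addOrderOf (p • a) := by
  have h2 : p ^ (j + 1) ∣ p * addOrderOf (p • a) :=
    h.trans (ord_dvd_mul_ord_nsmul p a)
  rw [pow_succ'] at h2
  exact (mul_dvd_mul_iff_left hpne).mp h2

lemma pow_dvd_or_of_dvd_lcm {p k a b : ℕ} (hp : p.Prime) (ha : a ≠ 0) (hb : b ≠ 0)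
    (h : p ^ k ∣ Nat.lcm a b) : p ^ k ∣ a ∨ p ^ k ∣ b := by
  have hlcm : Nat.lcm a b ≠ 0 := Nat.lcm_ne_zero ha hb
  have hk : k ≤ (Nat.lcm a b).factorization p :=
    (hp.pow_dvd_iff_le_factorization hlcm).mp h
  rw [Nat.factorization_lcm ha hb, Finsupp.sup_apply] at hk
  rcases le_max_iff.mp hk with h1 | h1
  · exact Or.inl ((hp.pow_dvd_iff_le_factorization ha).mpr h1)
  · exact Or.inr ((hp.pow_dvd_iff_le_factorization hb).mpr h1)

end OrderHelpers

section UpdateHelpers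
variable {ι : Type} [DecidableEq ι] {A : ι → Type} [∀ i, AddCommGroup (A i)]
  (φ : (∀ i, A i) → AddCircle (1 : ℝ)) (i : ι)
  (hadd : ∀ (x : ∀ j, A j) (a b : A i),
    φ (Function.update x i (a + b)) = φ (Function.update x i a) + φ (Function.update x i b))

include hadd

lemma upd_zero (x : ∀ j, A j) : φ (Function.update x i 0) = 0 := by
  have := hadd x 0 0
  rw [add_zero] at this
  exact (left_eq_add.mp this)

lemma upd_nsmul (x : ∀ j, A j) (m : ℕ) (a : A i) :
    φ (Function.update x i (m • a)) = m • φ (Function.update x i a) := by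
  induction m with
  | zero => simpa using upd_zero φ i hadd x
  | succ m ihm =>
      rw [succ_nsmul, hadd, ihm, succ_nsmul]

lemma upd_neg (x : ∀ j, A j) (a : A i) :
    φ (Function.update x i (-a)) = - φ (Function.update x i a) := by
  have := hadd x a (-a)
  rw [add_neg_cancel, upd_zero φ i hadd] at this
  exact (neg_eq_of_add_eq_zero_right this.symm).symm

lemma ord_dvd_card [Fintype (A i)] (x : ∀ j, A j) :
    addOrderOf (φ x) ∣ Fintype.card (A i) := by
  apply addOrderOf_dvd_of_nsmul_eq_zero
  have h1 : φ x = φ (Function.update x i (x i)) := by rw [Function.update_eq_self]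
  rw [h1, ← upd_nsmul φ i hadd, card_nsmul_eq_zero, upd_zero φ i hadd]

lemma ord_ne_zero [Fintype (A i)] (x : ∀ j, A j) : addOrderOf (φ x) ≠ 0 := by
  intro h
  have := ord_dvd_card φ i hadd x
  rw [h] at this
  exact (Fintype.card_pos (α := A i)).ne' (Nat.eq_zero_of_zero_dvd this)

end UpdateHelpers

section Main
variable {ι : Type} [Fintype ι] [DecidableEq ι] {A : ι → Type}
  [∀ i, AddCommGroup (A i)] [∀ i, Fintype (A i)]

/-- The number of tuples `x` such that `φ` vanishes on the whole `i₀`-line through `x`. -/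
noncomputable def cnt (i₀ : ι) (φ : (∀ i, A i) → AddCircle (1 : ℝ)) : ℕ :=
  (Finset.univ.filter fun x : ∀ i, A i => ∀ y, φ (Function.update x i₀ y) = 0).card

lemma cnt_le (i₀ : ι) (φ : (∀ i, A i) → AddCircle (1 : ℝ)) :
    cnt i₀ φ ≤ Fintype.card (∀ i, A i) := by
  classical
  calc cnt i₀ φ ≤ Finset.univ.card := Finset.card_filter_le _ _
    _ = Fintype.card (∀ i, A i) := Finset.card_univ

lemma main_count (p : ℕ) (hp : p.Prime) :
    ∀ (r : ℕ) (S : Finset ι), S.card = r → ∀ (n : ℕ), 1 ≤ n → ∀ i₀ ∈ S,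
      ∀ (φ : (∀ i, A i) → AddCircle (1 : ℝ)),
      (∀ x y : ∀ i, A i, (∀ i ∈ S, x i = y i) → φ x = φ y) →
      (∀ i ∈ S, ∀ (x : ∀ j, A j) (a b : A i),
          φ (Function.update x i (a + b))
            = φ (Function.update x i a) + φ (Function.update x i b)) →
      (∃ x, p ^ n ∣ addOrderOf (φ x)) →
      p ^ n * cnt i₀ φ ≤ (n + 1) ^ (r - 2) * Fintype.card (∀ i, A i) := by
  intro r
  induction r with
  | zero =>
      intro S hS n hn i₀ hi₀ φ _ _ _
      rw [Finset.card_eq_zero] at hS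
      subst hS
      exact absurd hi₀ (Finset.notMem_empty i₀)
  | succ r ih =>
      intro S hS n hn i₀ hi₀ φ Hdep Hadd hord
      obtain ⟨xs, hxs⟩ := hord
      set N := Fintype.card (∀ i, A i) with hN
      have hordne0 : addOrderOf (φ xs) ≠ 0 := ord_ne_zero φ i₀ (Hadd i₀ hi₀) xs
      have hφxs : φ xs ≠ 0 := by
        intro h
        rw [h, addOrderOf_zero] at hxs
        have h1 : p ^ n ≤ 1 := Nat.le_of_dvd one_pos hxs
        have h2 : 1 < p ^ n := Nat.one_lt_pow (by omega) hp.one_lt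
        omega
      rcases Nat.eq_zero_or_pos r with hr0 | hrpos
      · -- card S = 1 : the count is zero
        subst hr0
        have hsing : ∀ i ∈ S, i = i₀ := by
          rw [Finset.card_eq_one] at hS
          obtain ⟨a, ha⟩ := hS
          intro i hi
          rw [ha, Finset.mem_singleton] at hi hi₀
          rw [hi, hi₀]
        have hcnt : cnt i₀ φ = 0 := by
          rw [cnt, Finset.card_eq_zero, Finset.filter_eq_empty_iff]
          intro x _ hx
          apply hφxs
          have : φ xs = φ (Function.update x i₀ (xs i₀)) := by
            apply Hdep
            intro i hi
            rw [hsing i hi]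
            simp
          rw [this]
          exact hx (xs i₀)
        rw [hcnt, Nat.mul_zero]
        exact Nat.zero_le _
      -- now r ≥ 1 : pick a second coordinate i₁
      have herase : (S.erase i₀).Nonempty := by
        rw [← Finset.card_pos, Finset.card_erase_of_mem hi₀, hS]
        omega
      obtain ⟨i₁, hi₁mem⟩ := herase
      have hi₁S : i₁ ∈ S := Finset.mem_of_mem_erase hi₁mem
      have hne : i₁ ≠ i₀ := Finset.ne_of_mem_erase hi₁mem
      set S' := S.erase i₁ with hS'def
      have hi₀S' : i₀ ∈ S' := Finset.mem_erase.mpr ⟨fun h => hne h.symm, hi₀⟩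
      have hS'card : S'.card = r := by
        rw [hS'def, Finset.card_erase_of_mem hi₁S, hS]
        rfl
      set φ' : A i₁ → (∀ i, A i) → AddCircle (1 : ℝ) :=
        fun x₀ x => φ (Function.update x i₁ x₀) with hφ'def
      -- basic properties of φ'
      have Hdep' : ∀ (x₀ : A i₁) (x y : ∀ i, A i),
          (∀ i ∈ S', x i = y i) → φ' x₀ x = φ' x₀ y := by
        intro x₀ x y hxy
        apply Hdep
        intro i hiS
        by_cases hii : i = i₁
        · subst hii; simp
        · rw [Function.update_of_ne hii, Function.update_of_ne hii]
          exact hxy i (Finset.mem_erase.mpr ⟨hii, hiS⟩)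
      have Hadd' : ∀ (x₀ : A i₁), ∀ i ∈ S', ∀ (x : ∀ j, A j) (a b : A i),
          φ' x₀ (Function.update x i (a + b))
            = φ' x₀ (Function.update x i a) + φ' x₀ (Function.update x i b) := by
        intro x₀ i hi x a b
        have hii : i ≠ i₁ := (Finset.mem_erase.mp hi).1
        simp only [hφ'def]
        rw [Function.update_comm hii, Function.update_comm hii, Function.update_comm hii]
        exact Hadd i (Finset.mem_of_mem_erase hi) _ a b
      have Haddx₀ : ∀ (x₀ y₀ : A i₁) (x : ∀ i, A i),
          φ' (x₀ + y₀) x = φ' x₀ x + φ' y₀ x := fun x₀ y₀ x => Hadd i₁ hi₁S x x₀ y₀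
      have Hzero' : ∀ x, φ' 0 x = 0 := fun x => upd_zero φ i₁ (Hadd i₁ hi₁S) x
      have Hnsmul' : ∀ (m : ℕ) (x₀ : A i₁) (x : ∀ i, A i),
          φ' (m • x₀) x = m • φ' x₀ x := fun m x₀ x => upd_nsmul φ i₁ (Hadd i₁ hi₁S) x m x₀
      have Hneg' : ∀ (x₀ : A i₁) (x : ∀ i, A i), φ' (-x₀) x = - φ' x₀ x :=
        fun x₀ x => upd_neg φ i₁ (Hadd i₁ hi₁S) x x₀
      have Hordne : ∀ (x₀ : A i₁) (x : ∀ i, A i), addOrderOf (φ' x₀ x) ≠ 0 :=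
        fun x₀ x => ord_ne_zero (φ' x₀) i₀ (fun x a b => Hadd' x₀ i₀ hi₀S' x a b) x
      have hxsφ' : φ' (xs i₁) xs = φ xs := by
        simp only [hφ'def, Function.update_eq_self]
      -- the slice identity
      have hslice : Fintype.card (A i₁) * cnt i₀ φ = ∑ x₀ : A i₁, cnt i₀ (φ' x₀) := by
        have hcomm : ∀ (x₀ : A i₁) (x : ∀ i, A i) (y : A i₀),
            φ' x₀ (Function.update x i₀ y)
              = φ (Function.update (Function.update x i₁ x₀) i₀ y) := by
          intro x₀ x y
          simp only [hφ'def]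
          rw [Function.update_comm (Ne.symm hne)]
        have hcnt' : ∀ x₀ : A i₁, cnt i₀ (φ' x₀)
            = ∑ x : ∀ i, A i,
              (if ∀ y, φ (Function.update (Function.update x i₁ x₀) i₀ y) = 0 then 1 else 0) := by
          intro x₀
          rw [cnt, Finset.card_filter]
          refine Finset.sum_congr rfl fun x _ => ?_
          refine if_congr ?_ rfl rfl
          constructor
          · intro h y; rw [← hcomm]; exact h y
          · intro h y; rw [hcomm]; exact h y
        calc Fintype.card (A i₁) * cnt i₀ φ
            = Fintype.card (A i₁) •
              ∑ x : ∀ i, A i,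
                (if ∀ y, φ (Function.update x i₀ y) = 0 then 1 else 0) := by
              rw [smul_eq_mul, cnt, Finset.card_filter]
          _ = ∑ x₀ : A i₁, ∑ x : ∀ i, A i,
                (if ∀ y, φ (Function.update (Function.update x i₁ x₀) i₀ y) = 0
                  then 1 else 0) := by
              rw [← sum_update i₁
                (fun z => if ∀ y, φ (Function.update z i₀ y) = 0 then (1:ℕ) else 0)]
          _ = ∑ x₀ : A i₁, cnt i₀ (φ' x₀) := by
              refine Finset.sum_congr rfl fun x₀ _ => (hcnt' x₀).symm
      rcases eq_or_lt_of_le (show 1 ≤ r from hrpos) with hr1 | hr2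
      · -- base case : card S = 2
        have hr1' : r = 1 := hr1.symm
        subst hr1'
        have hS'sing : ∀ i ∈ S', i = i₀ := by
          rw [Finset.card_eq_one] at hS'card
          obtain ⟨a, ha⟩ := hS'card
          intro i hi
          rw [ha, Finset.mem_singleton] at hi
          rw [ha, Finset.mem_singleton] at hi₀S'
          rw [hi, hi₀S']
        set T₀ : AddSubgroup (A i₁) :=
          { carrier := {x₀ | ∀ x, φ' x₀ x = 0}
            add_mem' := by
              intro a b ha hb x
              rw [Haddx₀, ha x, hb x, add_zero]
            zero_mem' := fun x => Hzero' x
            neg_mem' := by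
              intro a ha x
              rw [Hneg', ha x, neg_zero] } with hT₀def
        have hT₀mem : ∀ x₀ : A i₁, x₀ ∈ T₀ ↔ ∀ x, φ' x₀ x = 0 := fun _ => Iff.rfl
        have hT₀card : Nat.card T₀ * p ^ n ≤ Fintype.card (A i₁) := by
          apply card_subgroup_mul_le T₀ (xs i₁)
          intro t ht htm
          have h1 : φ' (t • xs i₁) xs = 0 := (hT₀mem _).mp htm xs
          rw [Hnsmul', hxsφ'] at h1
          exact hxs.trans (addOrderOf_dvd_of_nsmul_eq_zero h1)
        have hcnt0 : ∀ x₀ : A i₁, cnt i₀ (φ' x₀) = if x₀ ∈ T₀ then N else 0 := by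
          intro x₀
          split_ifs with h
          · rw [cnt, Finset.filter_true_of_mem, Finset.card_univ]
            intro x _
            intro y
            exact (hT₀mem _).mp h _
          · rw [cnt, Finset.card_eq_zero, Finset.filter_eq_empty_iff]
            intro x _
            intro hx
            rw [hT₀mem] at h
            push_neg at h
            obtain ⟨x₂, hx₂⟩ := h
            apply hx₂
            have : φ' x₀ x₂ = φ' x₀ (Function.update x i₀ (x₂ i₀)) := by
              apply Hdep'
              intro i hi
              rw [hS'sing i hi]
              simp
            rw [this]
            exact hx (x₂ i₀)
        have hsum : ∑ x₀ : A i₁, cnt i₀ (φ' x₀) = Nat.card T₀ * N := by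
          rw [Finset.sum_congr rfl fun x₀ _ => hcnt0 x₀]
          rw [Finset.sum_ite, Finset.sum_const, Finset.sum_const_zero, add_zero, smul_eq_mul]
          congr 1
          rw [Nat.card_eq_fintype_card, Fintype.card_subtype]
        -- conclude
        have hkey : Fintype.card (A i₁) * cnt i₀ φ = Nat.card T₀ * N := hslice.trans hsum
        have hmul : Fintype.card (A i₁) * (p ^ n * cnt i₀ φ) ≤ Fintype.card (A i₁) * N := by
          calc Fintype.card (A i₁) * (p ^ n * cnt i₀ φ)
              = p ^ n * (Fintype.card (A i₁) * cnt i₀ φ) := by ring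
            _ = Nat.card T₀ * p ^ n * N := by rw [hkey]; ring
            _ ≤ Fintype.card (A i₁) * N := Nat.mul_le_mul_right _ hT₀card
        have := Nat.le_of_mul_le_mul_left hmul Fintype.card_pos
        simpa using this
      · -- inductive step : card S ≥ 3
        -- the filtration subgroups
        set Sj : ℕ → AddSubgroup (A i₁) := fun j =>
          { carrier := {x₀ | ∀ x, ¬ p ^ (j + 1) ∣ addOrderOf (φ' x₀ x)}
            add_mem' := by
              intro a b ha hb x hdvd
              have h1 : addOrderOf (φ' (a + b) x)
                  ∣ Nat.lcm (addOrderOf (φ' a x)) (addOrderOf (φ' b x)) := by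
                rw [Haddx₀]
                exact (AddCommute.all _ _).addOrderOf_add_dvd_lcm
              rcases pow_dvd_or_of_dvd_lcm hp (Hordne a x) (Hordne b x) (hdvd.trans h1) with
                h2 | h2
              · exact ha x h2
              · exact hb x h2
            zero_mem' := by
              intro x hdvd
              rw [Hzero', addOrderOf_zero] at hdvd
              have h1 : p ^ (j + 1) ≤ 1 := Nat.le_of_dvd one_pos hdvd
              have h2 : 1 < p ^ (j + 1) := Nat.one_lt_pow (by omega) hp.one_lt
              omega
            neg_mem' := by
              intro a ha x hdvd
              rw [Hneg', addOrderOf_neg] at hdvd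
              exact ha x hdvd } with hSjdef
        have hSjmem : ∀ (j : ℕ) (x₀ : A i₁),
            x₀ ∈ Sj j ↔ ∀ x, ¬ p ^ (j + 1) ∣ addOrderOf (φ' x₀ x) := fun _ _ => Iff.rfl
        -- lifting lemma
        have hlift : ∀ (m j : ℕ) (w : A i₁),
            (∀ x, ¬ p ^ (j + 1) ∣ addOrderOf (φ' (p ^ m • w) x)) →
            ∀ x, ¬ p ^ (j + m + 1) ∣ addOrderOf (φ' w x) := by
          intro m
          induction m with
          | zero => intro j w h x; simpa using h x
          | succ m ihm =>
              intro j w h x hc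
              have h' : ∀ x, ¬ p ^ (j + 1) ∣ addOrderOf (φ' (p ^ m • (p • w)) x) := by
                intro x'
                have heq : p ^ (m + 1) • w = p ^ m • (p • w) := by
                  rw [smul_smul, ← pow_succ]
                rw [← heq]
                exact h x'
              have h2 := ihm j (p • w) h' x
              apply h2
              rw [Hnsmul']
              exact pow_dvd_ord_psmul hp.ne_zero _ hc
        -- the index bound
        have hSjcard : ∀ j, j < n →
            Nat.card (Sj j) * p ^ (n - j) ≤ Fintype.card (A i₁) := by
          intro j hj
          apply card_subgroup_mul_le (Sj j) (xs i₁)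
          intro t ht htm
          set s := t.factorization p with hsdef
          have hts : p ^ s ∣ t := Nat.ordProj_dvd t p
          have hu : ¬ p ∣ t / p ^ s := Nat.not_dvd_ordCompl hp ht
          have htt : p ^ s * (t / p ^ s) = t := Nat.ordProj_mul_ordCompl_eq_self t p
          have hps : (p ^ s • xs i₁) ∈ Sj j := by
            rw [hSjmem]
            intro x hdvd
            apply (hSjmem j _).mp htm x
            have heq : φ' (t • xs i₁) x = (t / p ^ s) • φ' (p ^ s • xs i₁) x := by
              rw [← Hnsmul', smul_smul, mul_comm, htt]
            rw [heq]
            exact pow_dvd_ord_nsmul_of_coprime hp hu _ hdvd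
          by_contra hle
          have hs_lt : s < n - j := by
            by_contra hge
            push_neg at hge
            exact hle ((pow_dvd_pow p hge).trans hts)
          have h2 : (p ^ (n - j - 1) • xs i₁) ∈ Sj j := by
            have heq : p ^ (n - j - 1) • xs i₁
                = p ^ (n - j - 1 - s) • (p ^ s • xs i₁) := by
              rw [smul_smul, ← pow_add]
              congr 2
              omega
            rw [heq]
            exact AddSubgroup.nsmul_mem _ hps _
          have h3 := hlift (n - j - 1) j (xs i₁) ((hSjmem j _).mp h2) xs
          apply h3
          rw [hxsφ']
          have heq : j + (n - j - 1) + 1 = n := by omega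
          rw [heq]
          exact hxs
        -- the level function
        set lvl : A i₁ → ℕ :=
          fun x₀ => Nat.findGreatest (fun j => ∃ x, p ^ j ∣ addOrderOf (φ' x₀ x)) n
          with hlvldef
        have hlvl_le : ∀ x₀, lvl x₀ ≤ n := fun _ => Nat.findGreatest_le n
        have hlvl_mem : ∀ x₀, lvl x₀ < n → x₀ ∈ Sj (lvl x₀) := by
          intro x₀ h
          rw [hSjmem]
          intro x hdvd
          have hgt : Nat.findGreatest (fun j => ∃ x, p ^ j ∣ addOrderOf (φ' x₀ x)) n
              < lvl x₀ + 1 := Nat.lt_succ_self _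
          exact Nat.findGreatest_is_greatest
            (P := fun j => ∃ x, p ^ j ∣ addOrderOf (φ' x₀ x)) hgt (by omega) ⟨x, hdvd⟩
        have hlvl_spec : ∀ x₀, lvl x₀ ≠ 0 → ∃ x, p ^ (lvl x₀) ∣ addOrderOf (φ' x₀ x) :=
          fun x₀ h => (Nat.findGreatest_eq_iff.mp rfl).2.1 h
        -- pointwise bound
        have hpoint : ∀ x₀ : A i₁, p ^ n * cnt i₀ (φ' x₀)
            ≤ p ^ (n - lvl x₀) * ((lvl x₀ + 1) ^ (r - 2) * N) := by
          intro x₀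
          by_cases h0 : lvl x₀ = 0
          · rw [h0]
            simp only [Nat.sub_zero, zero_add, one_pow, one_mul]
            exact Nat.mul_le_mul_left _ (cnt_le i₀ (φ' x₀))
          · obtain ⟨x, hx⟩ := hlvl_spec x₀ h0
            have hIH := ih S' hS'card (lvl x₀) (Nat.one_le_iff_ne_zero.mpr h0) i₀ hi₀S'
              (φ' x₀) (Hdep' x₀) (Hadd' x₀) ⟨x, hx⟩
            calc p ^ n * cnt i₀ (φ' x₀)
                = p ^ (n - lvl x₀) * (p ^ (lvl x₀) * cnt i₀ (φ' x₀)) := by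
                  rw [← mul_assoc, ← pow_add]
                  have hle := hlvl_le x₀
                  congr 2
                  omega
              _ ≤ p ^ (n - lvl x₀) * ((lvl x₀ + 1) ^ (r - 2) * N) :=
                  Nat.mul_le_mul_left _ hIH
        -- fiber bound
        have hfiber : ∀ j ∈ Finset.range (n + 1),
            (Finset.univ.filter fun x₀ : A i₁ => lvl x₀ = j).card * p ^ (n - j)
              ≤ Fintype.card (A i₁) := by
          intro j hj
          have hjn : j ≤ n := by
            have := Finset.mem_range.mp hj
            omega
          rcases eq_or_lt_of_le hjn with hjeq | hjlt
          · subst hjeq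
            simp only [Nat.sub_self, pow_zero, mul_one]
            calc (Finset.univ.filter fun x₀ : A i₁ => lvl x₀ = j).card
                ≤ Finset.univ.card := Finset.card_filter_le _ _
              _ = Fintype.card (A i₁) := Finset.card_univ
          · have hsub : (Finset.univ.filter fun x₀ : A i₁ => lvl x₀ = j)
                ⊆ Finset.univ.filter fun x₀ : A i₁ => x₀ ∈ Sj j := by
              intro x₀ hx₀
              rw [Finset.mem_filter] at hx₀ ⊢
              refine ⟨hx₀.1, ?_⟩
              have := hlvl_mem x₀ (by omega)
              rwa [hx₀.2] at this
            have hcard : (Finset.univ.filter fun x₀ : A i₁ => x₀ ∈ Sj j).card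
                = Nat.card (Sj j) := by
              rw [Nat.card_eq_fintype_card, Fintype.card_subtype]
            calc (Finset.univ.filter fun x₀ : A i₁ => lvl x₀ = j).card * p ^ (n - j)
                ≤ (Finset.univ.filter fun x₀ : A i₁ => x₀ ∈ Sj j).card * p ^ (n - j) :=
                  Nat.mul_le_mul_right _ (Finset.card_le_card hsub)
              _ = Nat.card (Sj j) * p ^ (n - j) := by rw [hcard]
              _ ≤ Fintype.card (A i₁) := hSjcard j hjlt
        -- final chain
        have hchain : p ^ n * (Fintype.card (A i₁) * cnt i₀ φ)
            ≤ Fintype.card (A i₁) * ((n + 1) ^ (r - 1) * N) := by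
          calc p ^ n * (Fintype.card (A i₁) * cnt i₀ φ)
              = ∑ x₀ : A i₁, p ^ n * cnt i₀ (φ' x₀) := by
                rw [hslice, Finset.mul_sum]
            _ = ∑ j ∈ Finset.range (n + 1),
                  ∑ x₀ ∈ Finset.univ.filter fun x₀ : A i₁ => lvl x₀ = j,
                    p ^ n * cnt i₀ (φ' x₀) :=
                (Finset.sum_fiberwise_of_maps_to
                  (fun x₀ _ => Finset.mem_range.mpr (Nat.lt_succ_of_le (hlvl_le x₀))) _).symm
            _ ≤ ∑ j ∈ Finset.range (n + 1),
                  ∑ x₀ ∈ Finset.univ.filter fun x₀ : A i₁ => lvl x₀ = j,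
                    p ^ (n - j) * ((j + 1) ^ (r - 2) * N) := by
                refine Finset.sum_le_sum fun j _ => Finset.sum_le_sum fun x₀ hx₀ => ?_
                have hl : lvl x₀ = j := (Finset.mem_filter.mp hx₀).2
                rw [← hl]
                exact hpoint x₀
            _ = ∑ j ∈ Finset.range (n + 1),
                  ((Finset.univ.filter fun x₀ : A i₁ => lvl x₀ = j).card * p ^ (n - j))
                    * ((j + 1) ^ (r - 2) * N) := by
                refine Finset.sum_congr rfl fun j _ => ?_
                rw [Finset.sum_const, smul_eq_mul, mul_assoc]
            _ ≤ ∑ j ∈ Finset.range (n + 1),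
                  Fintype.card (A i₁) * ((j + 1) ^ (r - 2) * N) :=
                Finset.sum_le_sum fun j hj => Nat.mul_le_mul_right _ (hfiber j hj)
            _ ≤ ∑ j ∈ Finset.range (n + 1),
                  Fintype.card (A i₁) * ((n + 1) ^ (r - 2) * N) := by
                refine Finset.sum_le_sum fun j hj => ?_
                have hj1 : j + 1 ≤ n + 1 := by
                  have := Finset.mem_range.mp hj
                  omega
                exact Nat.mul_le_mul_left _
                  (Nat.mul_le_mul_right _ (Nat.pow_le_pow_left hj1 _))
            _ = (n + 1) * (Fintype.card (A i₁) * ((n + 1) ^ (r - 2) * N)) := by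
                rw [Finset.sum_const, Finset.card_range, smul_eq_mul]
            _ = Fintype.card (A i₁) * ((n + 1) ^ (r - 1) * N) := by
                have hpow : (n + 1) * (n + 1) ^ (r - 2) = (n + 1) ^ (r - 1) := by
                  rw [← pow_succ']
                  congr 1
                  omega
                calc (n + 1) * (Fintype.card (A i₁) * ((n + 1) ^ (r - 2) * N))
                    = Fintype.card (A i₁) * (((n + 1) * (n + 1) ^ (r - 2)) * N) := by ring
                  _ = Fintype.card (A i₁) * ((n + 1) ^ (r - 1) * N) := by rw [hpow]
        have hmul : Fintype.card (A i₁) * (p ^ n * cnt i₀ φ)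
            ≤ Fintype.card (A i₁) * ((n + 1) ^ (r - 1) * N) := by
          calc Fintype.card (A i₁) * (p ^ n * cnt i₀ φ)
              = p ^ n * (Fintype.card (A i₁) * cnt i₀ φ) := by ring
            _ ≤ Fintype.card (A i₁) * ((n + 1) ^ (r - 1) * N) := hchain
        have hfin := Nat.le_of_mul_le_mul_left hmul Fintype.card_pos
        have hexp : r + 1 - 2 = r - 1 := by omega
        rw [hexp]
        exact hfin

end Main

section Assembly
variable {ι : Type} [Fintype ι] [DecidableEq ι] {A : ι → Type}
  [∀ i, AddCommGroup (A i)] [∀ i, Fintype (A i)]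

lemma sum_eChar_eq (i₀ : ι) (φ : (∀ i, A i) → AddCircle (1 : ℝ))
    (Hadd : ∀ (x : ∀ j, A j) (a b : A i₀),
      φ (Function.update x i₀ (a + b))
        = φ (Function.update x i₀ a) + φ (Function.update x i₀ b)) :
    ∑ x : ∀ i, A i, eChar (φ x) = (cnt i₀ φ : ℂ) := by
  have hkey : (Fintype.card (A i₀) : ℂ) * ∑ x : ∀ i, A i, eChar (φ x)
      = (Fintype.card (A i₀) : ℂ) * (cnt i₀ φ : ℂ) := by
    calc (Fintype.card (A i₀) : ℂ) * ∑ x : ∀ i, A i, eChar (φ x)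
        = Fintype.card (A i₀) • ∑ x : ∀ i, A i, eChar (φ x) := by
          rw [nsmul_eq_mul]
      _ = ∑ x₀ : A i₀, ∑ x : ∀ i, A i, eChar (φ (Function.update x i₀ x₀)) :=
          (sum_update i₀ (fun x => eChar (φ x))).symm
      _ = ∑ x : ∀ i, A i, ∑ x₀ : A i₀, eChar (φ (Function.update x i₀ x₀)) :=
          Finset.sum_comm
      _ = ∑ x : ∀ i, A i,
            (if ∀ y, φ (Function.update x i₀ y) = 0
              then (Fintype.card (A i₀) : ℂ) else 0) := by
          refine Finset.sum_congr rfl fun x _ => ?_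
          exact char_sum (fun y => φ (Function.update x i₀ y)) (fun a b => Hadd x a b)
      _ = (Fintype.card (A i₀) : ℂ) *
            ∑ x : ∀ i, A i,
              (if ∀ y, φ (Function.update x i₀ y) = 0 then (1:ℂ) else 0) := by
          rw [Finset.mul_sum]
          refine Finset.sum_congr rfl fun x _ => ?_
          split_ifs <;> simp
      _ = (Fintype.card (A i₀) : ℂ) * (cnt i₀ φ : ℂ) := by
          congr 1
          rw [cnt, Finset.card_filter]
          push_cast
          rfl
  have hcard : (Fintype.card (A i₀) : ℂ) ≠ 0 := by
    exact_mod_cast (Fintype.card_pos (α := A i₀)).ne'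
  exact mul_left_cancel₀ hcard hkey

end Assembly

/-- If `k ≥ 2` and the image of the multilinear map `φ : A_1 × ⋯ × A_k → ℝ/ℤ` contains an
element of order `q = p^n` (`p` prime, `n ≥ 1`), then `bias(φ) ≤ (n+1)^(k-2)/q`. -/
theorem bias_le_of_order (k : ℕ) (hk : 2 ≤ k) (A : Fin k → Type) [∀ i, AddCommGroup (A i)]
    [∀ i, Fintype (A i)] (φ : (∀ i, A i) → AddCircle (1 : ℝ)) (hφ : IsMultiadditive φ)
    (p n : ℕ) (hp : p.Prime) (hn : 1 ≤ n) (hord : ∃ x, addOrderOf (φ x) = p ^ n) :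
    bias φ ≤ ((((n + 1) ^ (k - 2) : ℕ) : ℝ) / ((p ^ n : ℕ) : ℝ) : ℂ) := by
  classical
  have hk0 : 0 < k := by omega
  set i₀ : Fin k := ⟨0, hk0⟩ with hi₀def
  set N := Fintype.card (∀ i, A i) with hNdef
  obtain ⟨xo, hxo⟩ := hord
  -- the counting bound
  have hmain := main_count (A := A) p hp k Finset.univ
    (by rw [Finset.card_univ, Fintype.card_fin]) n hn i₀ (Finset.mem_univ _) φ
    (fun x y hxy => by
      have : x = y := funext fun i => hxy i (Finset.mem_univ i)
      rw [this])
    (fun i _ x a b => hφ i x a b)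
    ⟨xo, hxo ▸ dvd_rfl⟩
  -- bias = cnt / N
  have hbias : bias φ = (((cnt i₀ φ : ℝ) / (N : ℝ) : ℝ) : ℂ) := by
    rw [bias, sum_eChar_eq i₀ φ (fun x a b => hφ i₀ x a b)]
    push_cast
    rfl
  rw [hbias]
  rw [← Complex.ofReal_div, Complex.real_le_real]
  have hN0 : (0:ℝ) < (N:ℝ) := by
    exact_mod_cast Fintype.card_pos
  have hp0 : (0:ℝ) < ((p ^ n : ℕ) : ℝ) := by
    have : 0 < p ^ n := pow_pos hp.pos n
    exact_mod_cast this
  rw [div_le_div_iff₀ hN0 hp0]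
  have : (cnt i₀ φ) * (p ^ n) ≤ ((n + 1) ^ (k - 2)) * N := by
    calc (cnt i₀ φ) * (p ^ n) = p ^ n * cnt i₀ φ := by ring
      _ ≤ ((n + 1) ^ (k - 2)) * N := hmain
  exact_mod_cast this
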